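/- The sum over k ≥ 1 of h_k^{(3)}/k² equals (93/8)·ζ(5) − (21/4)·ζ(2)·ζ(3). -/

import Mathlib

open scoped BigOperators

/-- Odd harmonic number `h_k^{(n)} = ∑_{i=1}^k 1/(2i-1)^n`. -/
noncomputable def h (n k : ℕ) : ℝ := ∑ i ∈ Finset.range k, (1 : ℝ) / (2 * (i : ℝ) + 1) ^ n

/-- Generalized harmonic number `H_k^{(n)} = ∑_{i=1}^k 1/i^n`. -/
noncomputable def H (n k : ℕ) : ℝ := ∑ i ∈ Finset.range k, (1 : ℝ) / ((i : ℝ) + 1) ^ n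

/-- Riemann zeta value at a positive integer `m ≥ 2`: `ζ(m) = ∑_{n≥1} 1/n^m`. -/
noncomputable def Z (m : ℕ) : ℝ := ∑' n : ℕ+, (1 : ℝ) / ((n : ℕ) : ℝ) ^ m

namespace Stmt18
open Filter ENNReal




noncomputable def oo (p q r i j : ℕ) : ℝ :=
  1 / ((2*(i:ℝ)+1)^p * (2*(j:ℝ)+1)^q * ((2*(i:ℝ)+1) + (2*(j:ℝ)+1))^r)
noncomputable def oe (p q r i j : ℕ) : ℝ :=
  1 / ((2*(i:ℝ)+1)^p * (2*(j:ℝ)+2)^q * ((2*(i:ℝ)+1) + (2*(j:ℝ)+2))^r)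

lemma oo_nonneg (p q r i j : ℕ) : 0 ≤ oo p q r i j := by unfold oo; positivity
lemma oe_nonneg (p q r i j : ℕ) : 0 ≤ oe p q r i j := by unfold oe; positivity

noncomputable def TT (p q r : ℕ) : ℝ≥0∞ := ∑' (i : ℕ) (j : ℕ), ENNReal.ofReal (oo p q r i j)
noncomputable def MM (p q r : ℕ) : ℝ≥0∞ := ∑' (i : ℕ) (j : ℕ), ENNReal.ofReal (oe p q r i j)

lemma frac_rec (x y : ℝ) (hx : 0 < x) (hy : 0 < y) (p q r : ℕ) :
    1 / (x^(p+1) * y^(q+1) * (x+y)^r)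
      = 1 / (x^p * y^(q+1) * (x+y)^(r+1)) + 1 / (x^(p+1) * y^q * (x+y)^(r+1)) := by
  have hz : 0 < x + y := by linarith
  field_simp
  ring

lemma oo_rec (p q r i j : ℕ) :
    oo (p+1) (q+1) r i j = oo p (q+1) (r+1) i j + oo (p+1) q (r+1) i j := by
  unfold oo; exact frac_rec _ _ (by positivity) (by positivity) p q r

lemma oe_rec (p q r i j : ℕ) :
    oe (p+1) (q+1) r i j = oe p (q+1) (r+1) i j + oe (p+1) q (r+1) i j := by
  unfold oe; exact frac_rec _ _ (by positivity) (by positivity) p q r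

lemma TT_rec (p q r : ℕ) : TT (p+1) (q+1) r = TT p (q+1) (r+1) + TT (p+1) q (r+1) := by
  unfold TT
  rw [← ENNReal.tsum_add]
  refine tsum_congr fun i => ?_
  rw [← ENNReal.tsum_add]
  refine tsum_congr fun j => ?_
  rw [oo_rec, ENNReal.ofReal_add (oo_nonneg _ _ _ _ _) (oo_nonneg _ _ _ _ _)]

lemma MM_rec (p q r : ℕ) : MM (p+1) (q+1) r = MM p (q+1) (r+1) + MM (p+1) q (r+1) := by
  unfold MM
  rw [← ENNReal.tsum_add]
  refine tsum_congr fun i => ?_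
  rw [← ENNReal.tsum_add]
  refine tsum_congr fun j => ?_
  rw [oe_rec, ENNReal.ofReal_add (oe_nonneg _ _ _ _ _) (oe_nonneg _ _ _ _ _)]

lemma oo_swap (p q r i j : ℕ) : oo p q r i j = oo q p r j i := by
  unfold oo; ring_nf

lemma TT_symm (p q r : ℕ) : TT p q r = TT q p r := by
  unfold TT
  rw [ENNReal.tsum_comm]
  exact tsum_congr fun i => tsum_congr fun j => by rw [oo_swap p q r j i]

lemma tsum_shift (f : ℕ → ℝ≥0∞) (k : ℕ) :
    ∑' n, f n = (∑ i ∈ Finset.range k, f i) + ∑' i, f (i + k) :=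
  (Summable.sum_add_tsum_nat_add' ENNReal.summable).symm

lemma tsum_triangle (g : ℕ → ℕ → ℝ≥0∞) :
    ∑' (i : ℕ) (j : ℕ), g i (i + j + 1) = ∑' (c : ℕ), ∑ i ∈ Finset.range c, g i c := by
  have key : ∀ i : ℕ, ∑' (j : ℕ), g i (i + j + 1)
      = ∑' (c : ℕ), (if i < c then g i c else 0) := by
    intro i
    rw [tsum_shift (fun c => if i < c then g i c else 0) (i+1)]
    have h1 : (∑ c ∈ Finset.range (i+1), if i < c then g i c else 0) = 0 := by
      refine Finset.sum_eq_zero fun c hc => ?_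
      rw [Finset.mem_range] at hc
      simp [Nat.not_lt.mpr (Nat.lt_succ_iff.mp hc)]
    rw [h1, zero_add]
    refine tsum_congr fun j => ?_
    have hj : i < j + (i+1) := by omega
    rw [if_pos hj]
    congr 1
    omega
  calc ∑' (i : ℕ) (j : ℕ), g i (i + j + 1)
      = ∑' (i : ℕ) (c : ℕ), (if i < c then g i c else 0) := tsum_congr key
    _ = ∑' (c : ℕ) (i : ℕ), (if i < c then g i c else 0) := ENNReal.tsum_comm
    _ = ∑' (c : ℕ), ∑ i ∈ Finset.range c, g i c := by
        refine tsum_congr fun c => ?_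
        rw [tsum_eq_sum (s := Finset.range c) (fun i hi => by
          rw [Finset.mem_range] at hi
          simp [Nat.not_lt.mp fun hlt => hi hlt]  )]
        exact Finset.sum_congr rfl fun i hi => by rw [if_pos (Finset.mem_range.mp hi)]

lemma tsum_square (g : ℕ → ℕ → ℝ≥0∞) :
    ∑' (m : ℕ) (n : ℕ), g m n
      = (∑' c, g c c) + (∑' c, ∑ i ∈ Finset.range c, g i c)
        + (∑' c, ∑ i ∈ Finset.range c, g c i) := by
  have key : ∀ m, ∑' n, g m n
      = ((∑ n ∈ Finset.range m, g m n) + g m m) + ∑' j, g m (m + j + 1) := by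
    intro m
    rw [tsum_shift (g m) (m+1), Finset.sum_range_succ]
    congr 1
    exact tsum_congr fun j => by congr 1; omega
  calc ∑' (m : ℕ) (n : ℕ), g m n
      = ∑' m, (((∑ n ∈ Finset.range m, g m n) + g m m) + ∑' j, g m (m + j + 1)) :=
        tsum_congr key
    _ = ((∑' m, ∑ n ∈ Finset.range m, g m n) + ∑' m, g m m) + ∑' (m : ℕ) (j : ℕ), g m (m + j + 1) := by
        rw [ENNReal.tsum_add, ENNReal.tsum_add]
    _ = _ := by rw [tsum_triangle g]; ring


-- nonneg and bounds
lemma h_nonneg (q c : ℕ) : 0 ≤ h q c := Finset.sum_nonneg fun i _ => by positivity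
lemma H_nonneg (q c : ℕ) : 0 ≤ H q c := Finset.sum_nonneg fun i _ => by positivity

lemma h1_le (c : ℕ) : h 1 c ≤ c := by
  calc h 1 c ≤ ∑ i ∈ Finset.range c, (1:ℝ) := by
        refine Finset.sum_le_sum fun i _ => ?_
        rw [pow_one]
        have hi : (0:ℝ) ≤ (i:ℝ) := Nat.cast_nonneg i
        rw [div_le_one (by positivity)]
        linarith
    _ = c := by simp

lemma H1_le (c : ℕ) : H 1 c ≤ c := by
  calc H 1 c ≤ ∑ i ∈ Finset.range c, (1:ℝ) := by
        refine Finset.sum_le_sum fun i _ => ?_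
        rw [pow_one, div_le_one (by positivity)]
        linarith [Nat.cast_nonneg (α := ℝ) i]
    _ = c := by simp

lemma h2_bound' (c : ℕ) : h 2 c ≤ 2 - 2/(2*(c:ℝ)+1) := by
  induction c with
  | zero => simp [h]
  | succ n ih =>
    rw [h, Finset.sum_range_succ, ← h]
    push_cast
    have hp : (0:ℝ) < 2*(n:ℝ)+1 := by positivity
    have hp3 : (0:ℝ) < 2*(n:ℝ)+3 := by positivity
    have hcast : 2*((n:ℝ)+1)+1 = 2*(n:ℝ)+3 := by ring
    rw [hcast]
    have key : 1/(2*(n:ℝ)+1)^2 + 2/(2*(n:ℝ)+3) ≤ 2/(2*(n:ℝ)+1) := by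
      rw [div_add_div _ _ (by positivity) (by positivity), div_le_div_iff₀ (by positivity) (by positivity)]
      nlinarith [sq_nonneg ((n:ℝ))]
    linarith
lemma h2_bound (c : ℕ) : h 2 c ≤ 2 := by
  have := h2_bound' c
  have : (0:ℝ) ≤ 2/(2*(c:ℝ)+1) := by positivity
  linarith [h2_bound' c]

lemma h3_le_h2 (c : ℕ) : h 3 c ≤ h 2 c := by
  refine Finset.sum_le_sum fun i _ => ?_
  have hi : (0:ℝ) ≤ (i:ℝ) := Nat.cast_nonneg i
  have hb : (1:ℝ) ≤ 2*(i:ℝ)+1 := by linarith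
  have := pow_le_pow_right₀ hb (by norm_num : (2:ℕ) ≤ 3)
  exact one_div_le_one_div_of_le (by positivity) this

lemma h3_bound (c : ℕ) : h 3 c ≤ 2 := le_trans (h3_le_h2 c) (h2_bound c)

-- summability helper
lemma summable_one_div_sq : Summable (fun c : ℕ => 1/((c:ℝ)+1)^2) := by
  have base : Summable (fun n : ℕ => 1/(n:ℝ)^2) :=
    Real.summable_one_div_nat_pow.mpr (by norm_num)
  have := (summable_nat_add_iff 1).mpr base
  refine this.congr fun n => ?_
  push_cast
  ring_nf

lemma summable_of_sq (f : ℕ → ℝ) (C : ℝ) (h0 : ∀ c, 0 ≤ f c)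
    (hb : ∀ c, f c ≤ C / ((c:ℝ)+1)^2) : Summable f := by
  refine Summable.of_nonneg_of_le h0 hb ?_
  have := summable_one_div_sq.mul_left C
  refine this.congr fun n => ?_
  simp [div_eq_mul_inv]


-- real series
noncomputable def lam (s : ℕ) : ℝ := ∑' i : ℕ, 1/(2*(i:ℝ)+1)^s
noncomputable def B (q r : ℕ) : ℝ := ∑' c : ℕ, h q c / (2*(c:ℝ))^r
noncomputable def Vp (p r : ℕ) : ℝ := ∑' c : ℕ, h r c / (2*(c:ℝ)+1)^p
noncomputable def sig : ℝ := ∑' c : ℕ, (H 1 c / 2) / (2*(c:ℝ)+1)^4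
noncomputable def rho : ℝ := ∑' c : ℕ, H 1 (2*c+1) / (2*(c:ℝ)+1)^4

-- summability of all of them
lemma summable_lam (s : ℕ) (hs : 2 ≤ s) : Summable (fun i : ℕ => 1/(2*(i:ℝ)+1)^s) := by
  refine summable_of_sq _ 1 (fun c => by positivity) (fun c => ?_)
  have hc : (0:ℝ) ≤ (c:ℝ) := Nat.cast_nonneg c
  have h1 : ((c:ℝ)+1)^2 ≤ (2*(c:ℝ)+1)^2 := by nlinarith
  have h2 : (2*(c:ℝ)+1)^2 ≤ (2*(c:ℝ)+1)^s := by
    refine pow_le_pow_right₀ (by linarith) hs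
  rw [div_le_div_iff₀ (by positivity) (by positivity)]
  nlinarith [pow_pos (show (0:ℝ) < 2*c+1 by linarith) s]

lemma summable_B23 : Summable (fun c : ℕ => h 2 c / (2*(c:ℝ))^3) := by
  refine summable_of_sq _ 8 (fun c => div_nonneg (h_nonneg 2 c) (by positivity)) (fun c => ?_)
  rcases c with _ | n
  · simp [h]
  · have hn : (0:ℝ) ≤ (n:ℝ) := Nat.cast_nonneg n
    have hb := h2_bound (n+1)
    have hp : (0:ℝ) < (2*((n:ℝ)+1))^3 := by positivity
    push_cast
    rw [div_le_div_iff₀ hp (by positivity)]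
    have e1 : ((n:ℝ)+1+1)^2 ≤ (2*((n:ℝ)+1))^2 := by nlinarith
    have e2 : (2*((n:ℝ)+1))^2 ≤ (2*((n:ℝ)+1))^3 :=
      pow_le_pow_right₀ (by linarith) (by norm_num)
    have e3 : h 2 (n+1) * ((n:ℝ)+1+1)^2 ≤ 2 * (2*((n:ℝ)+1))^2 :=
      mul_le_mul hb e1 (by positivity) (by norm_num)
    linarith

lemma summable_B14 : Summable (fun c : ℕ => h 1 c / (2*(c:ℝ))^4) := by
  refine summable_of_sq _ 8 (fun c => div_nonneg (h_nonneg 1 c) (by positivity)) (fun c => ?_)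
  rcases c with _ | n
  · simp [h]
  · have hn : (0:ℝ) ≤ (n:ℝ) := Nat.cast_nonneg n
    have hb := h1_le (n+1)
    have hp : (0:ℝ) < (2*((n:ℝ)+1))^4 := by positivity
    push_cast
    push_cast at hb
    rw [div_le_div_iff₀ hp (by positivity)]
    have e1 : ((n:ℝ)+1+1)^2 ≤ (2*((n:ℝ)+1))^2 := by nlinarith
    have e3 : h 1 (n+1) * ((n:ℝ)+1+1)^2 ≤ ((n:ℝ)+1) * (2*((n:ℝ)+1))^2 :=
      mul_le_mul hb e1 (by positivity) (by positivity)
    have e4 : ((n:ℝ)+1) * (2*((n:ℝ)+1))^2 ≤ 8 * (2*((n:ℝ)+1))^4 := by nlinarith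
    linarith

lemma summable_B32 : Summable (fun c : ℕ => h 3 c / (2*(c:ℝ))^2) := by
  refine summable_of_sq _ 8 (fun c => div_nonneg (h_nonneg 3 c) (by positivity)) (fun c => ?_)
  rcases c with _ | n
  · simp [h]
  · have hn : (0:ℝ) ≤ (n:ℝ) := Nat.cast_nonneg n
    have hb := h3_bound (n+1)
    have hp : (0:ℝ) < (2*((n:ℝ)+1))^2 := by positivity
    push_cast
    rw [div_le_div_iff₀ hp (by positivity)]
    have e1 : ((n:ℝ)+1+1)^2 ≤ (2*((n:ℝ)+1))^2 := by nlinarith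
    have e3 : h 3 (n+1) * ((n:ℝ)+1+1)^2 ≤ 2 * (2*((n:ℝ)+1))^2 :=
      mul_le_mul hb e1 (by positivity) (by norm_num)
    linarith

lemma summable_Vp41 : Summable (fun c : ℕ => h 1 c / (2*(c:ℝ)+1)^4) := by
  refine summable_of_sq _ 8 (fun c => div_nonneg (h_nonneg 1 c) (by positivity)) (fun c => ?_)
  have hn : (0:ℝ) ≤ (c:ℝ) := Nat.cast_nonneg c
  have hb := h1_le c
  rw [div_le_div_iff₀ (by positivity) (by positivity)]
  have e1 : ((c:ℝ)+1)^2 ≤ (2*(c:ℝ)+1)^2 := by nlinarith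
  have e3 : h 1 c * ((c:ℝ)+1)^2 ≤ (c:ℝ) * (2*(c:ℝ)+1)^2 :=
    mul_le_mul hb e1 (by positivity) hn
  have hs : (c:ℝ) ≤ (2*(c:ℝ)+1)^2 := by nlinarith
  have e4 : (c:ℝ) * (2*(c:ℝ)+1)^2 ≤ (2*(c:ℝ)+1)^2 * (2*(c:ℝ)+1)^2 :=
    mul_le_mul_of_nonneg_right hs (by positivity)
  have e5 : (2*(c:ℝ)+1)^2 * (2*(c:ℝ)+1)^2 = (2*(c:ℝ)+1)^4 := by ring
  have e6 : (0:ℝ) ≤ (2*(c:ℝ)+1)^4 := by positivity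
  linarith

lemma summable_Vp32 : Summable (fun c : ℕ => h 2 c / (2*(c:ℝ)+1)^3) := by
  refine summable_of_sq _ 8 (fun c => div_nonneg (h_nonneg 2 c) (by positivity)) (fun c => ?_)
  have hn : (0:ℝ) ≤ (c:ℝ) := Nat.cast_nonneg c
  have hb := h2_bound c
  rw [div_le_div_iff₀ (by positivity) (by positivity)]
  have e1 : ((c:ℝ)+1)^2 ≤ (2*(c:ℝ)+1)^2 := by nlinarith
  have e2 : (2*(c:ℝ)+1)^2 ≤ (2*(c:ℝ)+1)^3 :=
    pow_le_pow_right₀ (by linarith) (by norm_num)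
  have e3 : h 2 c * ((c:ℝ)+1)^2 ≤ 2 * (2*(c:ℝ)+1)^2 :=
    mul_le_mul hb e1 (by positivity) (by norm_num)
  linarith

lemma summable_Vp23 : Summable (fun c : ℕ => h 3 c / (2*(c:ℝ)+1)^2) := by
  refine summable_of_sq _ 8 (fun c => div_nonneg (h_nonneg 3 c) (by positivity)) (fun c => ?_)
  have hn : (0:ℝ) ≤ (c:ℝ) := Nat.cast_nonneg c
  have hb := h3_bound c
  rw [div_le_div_iff₀ (by positivity) (by positivity)]
  have e1 : ((c:ℝ)+1)^2 ≤ (2*(c:ℝ)+1)^2 := by nlinarith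
  have e3 : h 3 c * ((c:ℝ)+1)^2 ≤ 2 * (2*(c:ℝ)+1)^2 :=
    mul_le_mul hb e1 (by positivity) (by norm_num)
  linarith

lemma summable_sig : Summable (fun c : ℕ => (H 1 c / 2) / (2*(c:ℝ)+1)^4) := by
  refine summable_of_sq _ 8 (fun c => div_nonneg (div_nonneg (H_nonneg 1 c) (by norm_num)) (by positivity)) (fun c => ?_)
  have hn : (0:ℝ) ≤ (c:ℝ) := Nat.cast_nonneg c
  have hb := H1_le c
  rw [div_le_div_iff₀ (by positivity) (by positivity)]
  have hb2 : H 1 c / 2 ≤ (c:ℝ) := by linarith [H_nonneg 1 c]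
  have e1 : ((c:ℝ)+1)^2 ≤ (2*(c:ℝ)+1)^2 := by nlinarith
  have e3 : H 1 c / 2 * ((c:ℝ)+1)^2 ≤ (c:ℝ) * (2*(c:ℝ)+1)^2 :=
    mul_le_mul hb2 e1 (by positivity) hn
  have hs : (c:ℝ) ≤ (2*(c:ℝ)+1)^2 := by nlinarith
  have e4 : (c:ℝ) * (2*(c:ℝ)+1)^2 ≤ (2*(c:ℝ)+1)^2 * (2*(c:ℝ)+1)^2 :=
    mul_le_mul_of_nonneg_right hs (by positivity)
  have e5 : (2*(c:ℝ)+1)^2 * (2*(c:ℝ)+1)^2 = (2*(c:ℝ)+1)^4 := by ring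
  have e6 : (0:ℝ) ≤ (2*(c:ℝ)+1)^4 := by positivity
  linarith

lemma summable_rho : Summable (fun c : ℕ => H 1 (2*c+1) / (2*(c:ℝ)+1)^4) := by
  refine summable_of_sq _ 8 (fun c => div_nonneg (H_nonneg 1 _) (by positivity)) (fun c => ?_)
  have hn : (0:ℝ) ≤ (c:ℝ) := Nat.cast_nonneg c
  have hb := H1_le (2*c+1)
  push_cast at hb
  rw [div_le_div_iff₀ (by positivity) (by positivity)]
  have e1 : ((c:ℝ)+1)^2 ≤ (2*(c:ℝ)+1)^2 := by nlinarith
  have e3 : H 1 (2*c+1) * ((c:ℝ)+1)^2 ≤ (2*(c:ℝ)+1) * (2*(c:ℝ)+1)^2 :=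
    mul_le_mul hb e1 (by positivity) (by positivity)
  have e5 : (2*(c:ℝ)+1) * (2*(c:ℝ)+1)^2 = (2*(c:ℝ)+1)^3 := by ring
  have e2 : (2*(c:ℝ)+1)^3 ≤ (2*(c:ℝ)+1)^4 :=
    pow_le_pow_right₀ (by linarith) (by norm_num)
  have e6 : (0:ℝ) ≤ (2*(c:ℝ)+1)^4 := by positivity
  linarith


-- bridges
lemma bridge (f : ℕ → ℝ) (h0 : ∀ c, 0 ≤ f c) (hs : Summable f) :
    ∑' c, ENNReal.ofReal (f c) = ENNReal.ofReal (∑' c, f c) :=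
  (ENNReal.ofReal_tsum_of_nonneg h0 hs).symm

lemma finsum_ofReal_div (q : ℕ) (w : ℝ) (hw : 0 ≤ w) (c : ℕ) :
    ∑ x ∈ Finset.range c, ENNReal.ofReal (1/((2*(x:ℝ)+1)^q * w))
      = ENNReal.ofReal (h q c / w) := by
  rw [← ENNReal.ofReal_sum_of_nonneg (fun i _ =>
    div_nonneg zero_le_one (mul_nonneg (by positivity) hw))]
  congr 1
  rw [h, Finset.sum_div]
  exact Finset.sum_congr rfl fun x _ => (div_div 1 ((2*(x:ℝ)+1)^q) w).symm

lemma finsum_ofReal_div' (w : ℝ) (hw : 0 ≤ w) (c : ℕ) :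
    ∑ x ∈ Finset.range c, ENNReal.ofReal (1/((2*(x:ℝ)+2) * w))
      = ENNReal.ofReal ((H 1 c / 2) / w) := by
  rw [← ENNReal.ofReal_sum_of_nonneg (fun i _ =>
    div_nonneg zero_le_one (mul_nonneg (by positivity) hw))]
  congr 1
  rw [H, Finset.sum_div, Finset.sum_div]
  refine Finset.sum_congr rfl fun x _ => ?_
  rw [pow_one, div_div, div_div]
  congr 1
  ring

lemma TT_boundary (q r : ℕ) :
    TT 0 q r = ∑' (c : ℕ), ENNReal.ofReal (h q c / (2*(c:ℝ))^r) := by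
  have e0 : TT 0 q r = ∑' (j : ℕ) (i : ℕ), ENNReal.ofReal (oo 0 q r i j) :=
    ENNReal.tsum_comm
  rw [e0]
  have e1 : ∑' (j : ℕ) (i : ℕ), ENNReal.ofReal (oo 0 q r i j)
      = ∑' (j : ℕ) (i : ℕ),
        (fun (x c : ℕ) => ENNReal.ofReal (1/((2*(x:ℝ)+1)^q * (2*(c:ℝ))^r))) j (j + i + 1) := by
    refine tsum_congr fun j => tsum_congr fun i => ?_
    simp only [oo]
    congr 1
    rw [pow_zero, one_mul]
    push_cast
    ring_nf
  rw [e1]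
  rw [tsum_triangle (fun (x c : ℕ) => ENNReal.ofReal (1/((2*(x:ℝ)+1)^q * (2*(c:ℝ))^r)))]
  refine tsum_congr fun c => ?_
  exact finsum_ofReal_div q _ (by positivity) c

lemma MM_boundary1 (p r : ℕ) :
    MM p 0 r = ∑' (c : ℕ), ENNReal.ofReal (h p c / (2*(c:ℝ)+1)^r) := by
  unfold MM
  have e1 : ∑' (i : ℕ) (j : ℕ), ENNReal.ofReal (oe p 0 r i j)
      = ∑' (i : ℕ) (j : ℕ),
        (fun (x c : ℕ) => ENNReal.ofReal (1/((2*(x:ℝ)+1)^p * (2*(c:ℝ)+1)^r))) i (i + j + 1) := by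
    refine tsum_congr fun i => tsum_congr fun j => ?_
    simp only [oe]
    congr 1
    rw [pow_zero, mul_one]
    push_cast
    ring_nf
  rw [e1]
  rw [tsum_triangle (fun (x c : ℕ) => ENNReal.ofReal (1/((2*(x:ℝ)+1)^p * (2*(c:ℝ)+1)^r)))]
  refine tsum_congr fun c => ?_
  exact finsum_ofReal_div p _ (by positivity) c

lemma MM_boundary2 :
    MM 0 1 4 = ∑' (c : ℕ), ENNReal.ofReal ((H 1 c / 2) / (2*(c:ℝ)+1)^4) := by
  have e0 : MM 0 1 4 = ∑' (j : ℕ) (i : ℕ), ENNReal.ofReal (oe 0 1 4 i j) :=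
    ENNReal.tsum_comm
  rw [e0]
  have e1 : ∑' (j : ℕ) (i : ℕ), ENNReal.ofReal (oe 0 1 4 i j)
      = ∑' (j : ℕ) (i : ℕ),
        (fun (x c : ℕ) => ENNReal.ofReal (1/((2*(x:ℝ)+2) * (2*(c:ℝ)+1)^4))) j (j + i + 1) := by
    refine tsum_congr fun j => tsum_congr fun i => ?_
    simp only [oe]
    congr 1
    rw [pow_zero, one_mul, pow_one]
    push_cast
    ring_nf
  rw [e1]
  rw [tsum_triangle (fun (x c : ℕ) => ENNReal.ofReal (1/((2*(x:ℝ)+2) * (2*(c:ℝ)+1)^4)))]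
  refine tsum_congr fun c => ?_
  exact finsum_ofReal_div' _ (by positivity) c

lemma TT320_square :
    TT 3 2 0 = ENNReal.ofReal (lam 5) + ENNReal.ofReal (Vp 2 3) + ENNReal.ofReal (Vp 3 2) := by
  unfold TT
  rw [tsum_square (fun i j => ENNReal.ofReal (oo 3 2 0 i j))]
  congr 1
  · congr 1
    · -- diagonal
      have e : ∀ c : ℕ, ENNReal.ofReal (oo 3 2 0 c c) = ENNReal.ofReal (1/(2*(c:ℝ)+1)^5) := by
        intro c
        congr 1
        unfold oo
        rw [pow_zero, mul_one, ← pow_add]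
      rw [tsum_congr e]
      exact bridge _ (fun c => by positivity) (summable_lam 5 (by norm_num))
    · -- upper triangle : ∑' c, ∑ i in range c, ofReal (oo 3 2 0 i c)
      have e : ∀ c : ℕ, (∑ i ∈ Finset.range c, ENNReal.ofReal (oo 3 2 0 i c))
          = ENNReal.ofReal (h 3 c / (2*(c:ℝ)+1)^2) := by
        intro c
        have : ∀ i : ℕ, oo 3 2 0 i c = 1/((2*(i:ℝ)+1)^3 * (2*(c:ℝ)+1)^2) := by
          intro i
          unfold oo
          rw [pow_zero, mul_one]
        rw [Finset.sum_congr rfl fun i _ => by rw [this i]]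
        exact finsum_ofReal_div 3 _ (by positivity) c
      rw [tsum_congr e]
      exact bridge _ (fun c => div_nonneg (h_nonneg 3 c) (by positivity)) summable_Vp23
  · -- lower triangle
    have e : ∀ c : ℕ, (∑ i ∈ Finset.range c, ENNReal.ofReal (oo 3 2 0 c i))
        = ENNReal.ofReal (h 2 c / (2*(c:ℝ)+1)^3) := by
      intro c
      have : ∀ i : ℕ, oo 3 2 0 c i = 1/((2*(i:ℝ)+1)^2 * (2*(c:ℝ)+1)^3) := by
        intro i
        unfold oo
        rw [pow_zero, mul_one, mul_comm]
      rw [Finset.sum_congr rfl fun i _ => by rw [this i]]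
      exact finsum_ofReal_div 2 _ (by positivity) c
    rw [tsum_congr e]
    exact bridge _ (fun c => div_nonneg (h_nonneg 2 c) (by positivity)) summable_Vp32

lemma TT320_prod : TT 3 2 0 = ENNReal.ofReal (lam 3 * lam 2) := by
  unfold TT
  have e : ∀ i j : ℕ, ENNReal.ofReal (oo 3 2 0 i j)
      = ENNReal.ofReal (1/(2*(i:ℝ)+1)^3) * ENNReal.ofReal (1/(2*(j:ℝ)+1)^2) := by
    intro i j
    rw [← ENNReal.ofReal_mul (by positivity)]
    congr 1
    unfold oo
    rw [pow_zero, mul_one, div_mul_div_comm, one_mul]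
  calc ∑' (i : ℕ) (j : ℕ), ENNReal.ofReal (oo 3 2 0 i j)
      = ∑' (i : ℕ) (j : ℕ), ENNReal.ofReal (1/(2*(i:ℝ)+1)^3) * ENNReal.ofReal (1/(2*(j:ℝ)+1)^2) :=
        tsum_congr fun i => tsum_congr fun j => e i j
    _ = (∑' (i : ℕ), ENNReal.ofReal (1/(2*(i:ℝ)+1)^3)) * (∑' (j : ℕ), ENNReal.ofReal (1/(2*(j:ℝ)+1)^2)) := by
        rw [← ENNReal.tsum_mul_right]
        exact tsum_congr fun i => ENNReal.tsum_mul_left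
    _ = ENNReal.ofReal (lam 3) * ENNReal.ofReal (lam 2) := by
        rw [bridge _ (fun c => by positivity) (summable_lam 3 (by norm_num)),
            bridge _ (fun c => by positivity) (summable_lam 2 (by norm_num))]
        rfl
    _ = ENNReal.ofReal (lam 3 * lam 2) :=
        (ENNReal.ofReal_mul (tsum_nonneg fun i => by positivity)).symm


lemma H1_eq (k : ℕ) : H 1 k = ∑ i ∈ Finset.range k, 1/((i:ℝ)+1) := by
  unfold H
  exact Finset.sum_congr rfl fun i _ => by rw [pow_one]

lemma telescope (A : ℕ) :
    HasSum (fun b : ℕ => 1/((b:ℝ)+1) - 1/((A:ℝ)+(b:ℝ)+1)) (H 1 A) := by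
  rw [hasSum_iff_tendsto_nat_of_nonneg (fun b => by
    have hb : ((b:ℝ)+1) ≤ (A:ℝ)+(b:ℝ)+1 := by
      have : (0:ℝ) ≤ (A:ℝ) := Nat.cast_nonneg A
      linarith
    have := one_div_le_one_div_of_le (by positivity) hb
    linarith)]
  have key : ∀ B : ℕ, ∑ b ∈ Finset.range B, (1/((b:ℝ)+1) - 1/((A:ℝ)+(b:ℝ)+1))
      = H 1 A - (H 1 (A+B) - H 1 B) := by
    intro B
    rw [Finset.sum_sub_distrib]
    have e1 : ∑ b ∈ Finset.range B, 1/((b:ℝ)+1) = H 1 B := (H1_eq B).symm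
    have e2 : ∑ b ∈ Finset.range B, 1/((A:ℝ)+(b:ℝ)+1) = H 1 (A+B) - H 1 A := by
      have e3 := Finset.sum_range_add (fun k : ℕ => 1/((k:ℝ)+1)) A B
      have e6 : ∑ x ∈ Finset.range B, (fun k : ℕ => 1/((k:ℝ)+1)) (A + x)
          = ∑ b ∈ Finset.range B, 1/((A:ℝ)+(b:ℝ)+1) := by
        refine Finset.sum_congr rfl fun x _ => ?_
        push_cast
        ring_nf
      rw [e6, ← H1_eq, ← H1_eq] at e3
      linarith
    rw [e1, e2]
    ring
  have hd : Tendsto (fun B : ℕ => H 1 (A+B) - H 1 B) atTop (nhds 0) := by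
    have hrepr : ∀ B : ℕ, H 1 (A+B) - H 1 B = ∑ x ∈ Finset.range A, 1/((B:ℝ)+(x:ℝ)+1) := by
      intro B
      have e3 := Finset.sum_range_add (fun k : ℕ => 1/((k:ℝ)+1)) B A
      have e6 : ∑ x ∈ Finset.range A, (fun k : ℕ => 1/((k:ℝ)+1)) (B + x)
          = ∑ x ∈ Finset.range A, 1/((B:ℝ)+(x:ℝ)+1) := by
        refine Finset.sum_congr rfl fun x _ => ?_
        push_cast
        ring_nf
      rw [e6, ← H1_eq, ← H1_eq] at e3
      rw [Nat.add_comm A B]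
      linarith
    apply squeeze_zero (g := fun B : ℕ => (A:ℝ)/((B:ℝ)+1))
    · intro B
      rw [hrepr B]
      exact Finset.sum_nonneg fun x _ => by positivity
    · intro B
      rw [hrepr B]
      calc ∑ x ∈ Finset.range A, 1/((B:ℝ)+(x:ℝ)+1)
          ≤ ∑ x ∈ Finset.range A, 1/((B:ℝ)+1) := by
            refine Finset.sum_le_sum fun x _ => ?_
            refine one_div_le_one_div_of_le (by positivity) ?_
            have : (0:ℝ) ≤ (x:ℝ) := Nat.cast_nonneg x
            linarith
        _ = (A:ℝ)/((B:ℝ)+1) := by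
            rw [Finset.sum_const, Finset.card_range, nsmul_eq_mul, mul_one_div]
    · have base := tendsto_const_div_atTop_nhds_zero_nat (A:ℝ)
      have comp := base.comp (tendsto_add_atTop_nat 1)
      refine comp.congr fun B => ?_
      simp only [Function.comp_apply]
      push_cast
      ring_nf
  have : Tendsto (fun B : ℕ => H 1 A - (H 1 (A+B) - H 1 B)) atTop (nhds (H 1 A - 0)) :=
    tendsto_const_nhds.sub hd
  rw [sub_zero] at this
  exact this.congr fun B => (key B).symm

-- the double-sum term for rho
noncomputable def F (i b : ℕ) : ℝ :=
  1/((2*(i:ℝ)+1)^3 * (((b:ℝ)+1) * ((2*(i:ℝ)+1) + ((b:ℝ)+1))))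

lemma F_nonneg (i b : ℕ) : 0 ≤ F i b := by unfold F; positivity

lemma inner_tel (i : ℕ) :
    ∑' (b : ℕ), ENNReal.ofReal (F i b)
      = ENNReal.ofReal (H 1 (2*i+1) / (2*(i:ℝ)+1)^4) := by
  have hx : (0:ℝ) < 2*(i:ℝ)+1 := by positivity
  have tel := telescope (2*i+1)
  have tel2 := tel.mul_left (1/(2*(i:ℝ)+1)^4)
  have efun : (fun b : ℕ => 1/(2*(i:ℝ)+1)^4 * (1/((b:ℝ)+1) - 1/((((2*i+1 : ℕ)):ℝ)+(b:ℝ)+1)))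
      = fun b : ℕ => F i b := by
    funext b
    unfold F
    have hb : (0:ℝ) < (b:ℝ)+1 := by positivity
    push_cast
    have hz : (0:ℝ) < 2*(i:ℝ)+1+((b:ℝ)+1) := by linarith
    field_simp
    ring
  rw [efun] at tel2
  have hsum : Summable (fun b : ℕ => F i b) := tel2.summable
  rw [bridge _ (fun b => F_nonneg i b) hsum, tel2.tsum_eq]
  congr 1
  rw [one_div_mul_eq_div]

lemma rho_eq1 : ∑' (i : ℕ) (b : ℕ), ENNReal.ofReal (F i b) = ENNReal.ofReal rho := by
  rw [tsum_congr inner_tel]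
  exact bridge _ (fun c => div_nonneg (H_nonneg 1 _) (by positivity)) summable_rho

lemma rho_eq2 : ∑' (i : ℕ) (b : ℕ), ENNReal.ofReal (F i b) = TT 3 1 1 + MM 3 1 1 := by
  have split : ∀ i : ℕ, ∑' (b : ℕ), ENNReal.ofReal (F i b)
      = (∑' (j : ℕ), ENNReal.ofReal (F i (2*j))) + ∑' (j : ℕ), ENNReal.ofReal (F i (2*j+1)) :=
    fun i => (tsum_even_add_odd ENNReal.summable ENNReal.summable).symm
  rw [tsum_congr split, ENNReal.tsum_add]
  congr 1
  · unfold TT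
    refine tsum_congr fun i => tsum_congr fun j => ?_
    congr 1
    unfold F oo
    congr 1
    push_cast
    ring
  · unfold MM
    refine tsum_congr fun i => tsum_congr fun j => ?_
    congr 1
    unfold F oe
    congr 1
    push_cast
    ring

-- real nonnegativity
lemma lam_nonneg (s : ℕ) : 0 ≤ lam s := tsum_nonneg fun i => by positivity
lemma B_nonneg (q r : ℕ) : 0 ≤ B q r :=
  tsum_nonneg fun c => div_nonneg (h_nonneg q c) (by positivity)
lemma Vp_nonneg (p r : ℕ) : 0 ≤ Vp p r :=
  tsum_nonneg fun c => div_nonneg (h_nonneg r c) (by positivity)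
lemma sig_nonneg : 0 ≤ sig :=
  tsum_nonneg fun c => div_nonneg (div_nonneg (H_nonneg 1 c) (by norm_num)) (by positivity)
lemma rho_nonneg : 0 ≤ rho :=
  tsum_nonneg fun c => div_nonneg (H_nonneg 1 _) (by positivity)

-- boundary values as ofReal
lemma TTB (q r : ℕ) (hsum : Summable (fun c : ℕ => h q c / (2*(c:ℝ))^r)) :
    TT 0 q r = ENNReal.ofReal (B q r) := by
  rw [TT_boundary q r]
  exact bridge _ (fun c => div_nonneg (h_nonneg q c) (by positivity)) hsum

lemma MMB (p r : ℕ) (hsum : Summable (fun c : ℕ => h p c / (2*(c:ℝ)+1)^r)) :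
    MM p 0 r = ENNReal.ofReal (∑' c : ℕ, h p c / (2*(c:ℝ)+1)^r) := by
  rw [MM_boundary1 p r]
  exact bridge _ (fun c => div_nonneg (h_nonneg p c) (by positivity)) hsum

lemma MMB2 : MM 0 1 4 = ENNReal.ofReal sig := by
  rw [MM_boundary2]
  exact bridge _ (fun c => div_nonneg (div_nonneg (H_nonneg 1 c) (by norm_num)) (by positivity))
    summable_sig

-- master ENNReal identity (a): Tornheim reduction of TT 3 2 0
lemma masterA : lam 3 * lam 2 = 3 * B 2 3 + 6 * B 1 4 + B 3 2 := by
  have r1 : TT 3 2 0 = TT 2 2 1 + TT 3 1 1 := TT_rec 2 1 0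
  have r2 : TT 2 2 1 = TT 1 2 2 + TT 2 1 2 := TT_rec 1 1 1
  have r3 : TT 1 2 2 = TT 0 2 3 + TT 1 1 3 := TT_rec 0 1 2
  have r4 : TT 2 1 2 = TT 1 1 3 + TT 2 0 3 := TT_rec 1 0 2
  have r5 : TT 1 1 3 = TT 0 1 4 + TT 1 0 4 := TT_rec 0 0 3
  have r6 : TT 3 1 1 = TT 2 1 2 + TT 3 0 2 := TT_rec 2 0 1
  have s1 : TT 1 0 4 = TT 0 1 4 := TT_symm 1 0 4
  have s2 : TT 2 0 3 = TT 0 2 3 := TT_symm 2 0 3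
  have s3 : TT 3 0 2 = TT 0 3 2 := TT_symm 3 0 2
  have b1 : TT 0 2 3 = ENNReal.ofReal (B 2 3) := TTB 2 3 summable_B23
  have b2 : TT 0 1 4 = ENNReal.ofReal (B 1 4) := TTB 1 4 summable_B14
  have b3 : TT 0 3 2 = ENNReal.ofReal (B 3 2) := TTB 3 2 summable_B32
  have big : ENNReal.ofReal (lam 3 * lam 2)
      = ENNReal.ofReal (B 2 3) + (ENNReal.ofReal (B 1 4) + ENNReal.ofReal (B 1 4))
        + ((ENNReal.ofReal (B 1 4) + ENNReal.ofReal (B 1 4)) + ENNReal.ofReal (B 2 3))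
        + (((ENNReal.ofReal (B 1 4) + ENNReal.ofReal (B 1 4)) + ENNReal.ofReal (B 2 3))
            + ENNReal.ofReal (B 3 2)) := by
    rw [← TT320_prod, r1, r2, r6, r3, r4, r5, s1, s2, s3, b1, b2, b3]
  have tr := congrArg ENNReal.toReal big
  rw [ENNReal.toReal_ofReal (mul_nonneg (lam_nonneg 3) (lam_nonneg 2))] at tr
  simp only [ENNReal.toReal_add, ENNReal.add_ne_top, ENNReal.ofReal_ne_top, ne_eq,
    not_false_eq_true, and_self, true_and, ENNReal.toReal_ofReal'] at tr
  rw [max_eq_left (B_nonneg 2 3), max_eq_left (B_nonneg 1 4), max_eq_left (B_nonneg 3 2)] at tr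
  linarith


lemma masterB : lam 3 * lam 2 = lam 5 + Vp 2 3 + Vp 3 2 := by
  have big : ENNReal.ofReal (lam 3 * lam 2)
      = ENNReal.ofReal (lam 5) + ENNReal.ofReal (Vp 2 3) + ENNReal.ofReal (Vp 3 2) := by
    rw [← TT320_prod, TT320_square]
  have tr := congrArg ENNReal.toReal big
  rw [ENNReal.toReal_ofReal (mul_nonneg (lam_nonneg 3) (lam_nonneg 2))] at tr
  simp only [ENNReal.toReal_add, ENNReal.add_ne_top, ENNReal.ofReal_ne_top, ne_eq,
    not_false_eq_true, and_self, true_and, ENNReal.toReal_ofReal'] at tr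
  rw [max_eq_left (lam_nonneg 5), max_eq_left (Vp_nonneg 2 3), max_eq_left (Vp_nonneg 3 2)] at tr
  linarith

lemma masterC : rho = 2*B 1 4 + B 2 3 + B 3 2 + (sig + Vp 4 1 + Vp 3 2 + Vp 2 3) := by
  have r4 : TT 2 1 2 = TT 1 1 3 + TT 2 0 3 := TT_rec 1 0 2
  have r5 : TT 1 1 3 = TT 0 1 4 + TT 1 0 4 := TT_rec 0 0 3
  have r6 : TT 3 1 1 = TT 2 1 2 + TT 3 0 2 := TT_rec 2 0 1
  have s1 : TT 1 0 4 = TT 0 1 4 := TT_symm 1 0 4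
  have s2 : TT 2 0 3 = TT 0 2 3 := TT_symm 2 0 3
  have s3 : TT 3 0 2 = TT 0 3 2 := TT_symm 3 0 2
  have b1 : TT 0 2 3 = ENNReal.ofReal (B 2 3) := TTB 2 3 summable_B23
  have b2 : TT 0 1 4 = ENNReal.ofReal (B 1 4) := TTB 1 4 summable_B14
  have b3 : TT 0 3 2 = ENNReal.ofReal (B 3 2) := TTB 3 2 summable_B32
  have m1 : MM 3 1 1 = MM 2 1 2 + MM 3 0 2 := MM_rec 2 0 1
  have m2 : MM 2 1 2 = MM 1 1 3 + MM 2 0 3 := MM_rec 1 0 2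
  have m3 : MM 1 1 3 = MM 0 1 4 + MM 1 0 4 := MM_rec 0 0 3
  have mb1 : MM 0 1 4 = ENNReal.ofReal sig := MMB2
  have mb2 : MM 1 0 4 = ENNReal.ofReal (Vp 4 1) := MMB 1 4 summable_Vp41
  have mb3 : MM 2 0 3 = ENNReal.ofReal (Vp 3 2) := MMB 2 3 summable_Vp32
  have mb4 : MM 3 0 2 = ENNReal.ofReal (Vp 2 3) := MMB 3 2 summable_Vp23
  have big : ENNReal.ofReal rho
      = (((ENNReal.ofReal (B 1 4) + ENNReal.ofReal (B 1 4)) + ENNReal.ofReal (B 2 3))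
          + ENNReal.ofReal (B 3 2))
        + (((ENNReal.ofReal sig + ENNReal.ofReal (Vp 4 1)) + ENNReal.ofReal (Vp 3 2))
          + ENNReal.ofReal (Vp 2 3)) := by
    rw [← rho_eq1, rho_eq2, r6, r4, r5, s1, s2, s3, b1, b2, b3, m1, m2, m3, mb1, mb2, mb3, mb4]
  have tr := congrArg ENNReal.toReal big
  rw [ENNReal.toReal_ofReal rho_nonneg] at tr
  simp only [ENNReal.toReal_add, ENNReal.add_ne_top, ENNReal.ofReal_ne_top, ne_eq,
    not_false_eq_true, and_self, true_and, ENNReal.toReal_ofReal'] at tr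
  rw [max_eq_left (B_nonneg 1 4), max_eq_left (B_nonneg 2 3), max_eq_left (B_nonneg 3 2),
      max_eq_left sig_nonneg, max_eq_left (Vp_nonneg 4 1), max_eq_left (Vp_nonneg 3 2),
      max_eq_left (Vp_nonneg 2 3)] at tr
  linarith

lemma h_succ (q k : ℕ) : h q (k+1) = h q k + 1/(2*(k:ℝ)+1)^q := by
  rw [h, Finset.sum_range_succ, ← h]

lemma H_succ (q k : ℕ) : H q (k+1) = H q k + 1/((k:ℝ)+1)^q := by
  rw [H, Finset.sum_range_succ, ← H]

lemma Hsplit (c : ℕ) : H 1 (2*c+1) = h 1 (c+1) + H 1 c / 2 := by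
  induction c with
  | zero => simp [H, h]
  | succ n ih =>
    have e1 : 2*(n+1)+1 = (2*n+1) + 1 + 1 := by ring
    rw [e1, H_succ, H_succ, ih, h_succ 1 (n+1), H_succ 1 n]
    have key : (1:ℝ)/(2*(n:ℝ)+2) = (1/((n:ℝ)+1))/2 := by
      have hne : ((n:ℝ)+1) ≠ 0 := by positivity
      field_simp
    simp only [pow_one]
    push_cast
    ring_nf
    ring_nf at key
    linarith [key]

lemma masterD : rho = Vp 4 1 + (lam 5 + sig) := by
  have pt : ∀ c : ℕ, H 1 (2*c+1) / (2*(c:ℝ)+1)^4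
      = h 1 c / (2*(c:ℝ)+1)^4 + (1/(2*(c:ℝ)+1)^5 + (H 1 c / 2) / (2*(c:ℝ)+1)^4) := by
    intro c
    rw [Hsplit c]
    rw [h, Finset.sum_range_succ, ← h]
    have hx : (0:ℝ) < 2*(c:ℝ)+1 := by positivity
    field_simp
    ring
  unfold rho
  rw [tsum_congr pt]
  rw [Summable.tsum_add summable_Vp41 ((summable_lam 5 (by norm_num)).add summable_sig),
      Summable.tsum_add (summable_lam 5 (by norm_num)) summable_sig]
  rfl

lemma Z_nat (s : ℕ) : Z s = ∑' n : ℕ, 1/((n:ℝ)+1)^s := by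
  unfold Z
  rw [← Equiv.pnatEquivNat.symm.tsum_eq (fun k : ℕ+ => 1/(((k:ℕ)):ℝ)^s)]
  refine tsum_congr fun n => ?_
  have hc : ((Equiv.pnatEquivNat.symm n : ℕ+) : ℕ) = n + 1 := rfl
  rw [hc]
  push_cast
  ring_nf

lemma summable_ZN (s : ℕ) (hs : 2 ≤ s) : Summable (fun n : ℕ => 1/((n:ℝ)+1)^s) := by
  refine summable_of_sq _ 1 (fun c => by positivity) (fun c => ?_)
  have h1 : ((c:ℝ)+1)^2 ≤ ((c:ℝ)+1)^s :=
    pow_le_pow_right₀ (by nlinarith [Nat.cast_nonneg (α := ℝ) c]) hs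
  have h2 : (0:ℝ) < ((c:ℝ)+1)^2 := by positivity
  have h3 : (0:ℝ) < ((c:ℝ)+1)^s := by positivity
  rw [div_le_div_iff₀ h3 h2]
  nlinarith

set_option maxHeartbeats 1000000 in
lemma Z_split (s : ℕ) (hs : 2 ≤ s) : Z s = lam s + (1/2)^s * Z s := by
  have hsum : Summable (fun n : ℕ => 1/((n:ℝ)+1)^s) := summable_ZN s hs
  have he : Summable (fun k : ℕ => (fun n : ℕ => 1/((n:ℝ)+1)^s) (2*k)) :=
    hsum.comp_injective (i := fun k : ℕ => 2*k) (fun a b hab => by simpa using hab)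
  have ho : Summable (fun k : ℕ => (fun n : ℕ => 1/((n:ℝ)+1)^s) (2*k+1)) :=
    hsum.comp_injective (i := fun k : ℕ => 2*k+1) (fun a b hab => by simpa using hab)
  have eo : (∑' k : ℕ, (fun n : ℕ => 1/((n:ℝ)+1)^s) (2*k))
      + (∑' k : ℕ, (fun n : ℕ => 1/((n:ℝ)+1)^s) (2*k+1))
      = ∑' n : ℕ, 1/((n:ℝ)+1)^s := tsum_even_add_odd (f := fun n : ℕ => 1/((n:ℝ)+1)^s) he ho
  have h1 : ∑' k : ℕ, (fun n : ℕ => 1/((n:ℝ)+1)^s) (2*k) = lam s := by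
    unfold lam
    refine tsum_congr fun j => ?_
    push_cast
    ring_nf
  have h2 : ∑' k : ℕ, (fun n : ℕ => 1/((n:ℝ)+1)^s) (2*k+1) = (1/2)^s * Z s := by
    have pt : ∀ j : ℕ, (fun n : ℕ => 1/((n:ℝ)+1)^s) (2*j+1)
        = (1/2)^s * (1/((j:ℝ)+1)^s) := by
      intro j
      simp only []
      push_cast
      rw [show (2*(j:ℝ)+1+1) = 2*((j:ℝ)+1) from by ring, mul_pow, one_div_pow,
        div_mul_div_comm, one_mul]
    rw [tsum_congr pt, tsum_mul_left, ← Z_nat]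
  conv_lhs => rw [Z_nat]
  rw [← eo, h1, h2]

lemma lam5_val : lam 5 = 31/32 * Z 5 := by
  have := Z_split 5 (by norm_num)
  norm_num at this
  linarith

lemma lam3_val : lam 3 = 7/8 * Z 3 := by
  have := Z_split 3 (by norm_num)
  norm_num at this
  linarith

lemma lam2_val : lam 2 = 3/4 * Z 2 := by
  have := Z_split 2 (by norm_num)
  norm_num at this
  linarith

lemma LHS_eq : (∑' k : ℕ+, h 3 (k : ℕ) / ((k : ℕ) : ℝ) ^ 2) = 4 * B 3 2 := by
  have e1 : (∑' k : ℕ+, h 3 (k : ℕ) / ((k : ℕ) : ℝ) ^ 2)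
      = ∑' n : ℕ, h 3 (n+1) / ((n:ℝ)+1)^2 := by
    rw [← Equiv.pnatEquivNat.symm.tsum_eq (fun k : ℕ+ => h 3 (k : ℕ) / ((k : ℕ) : ℝ) ^ 2)]
    refine tsum_congr fun n => ?_
    have hc : ((Equiv.pnatEquivNat.symm n : ℕ+) : ℕ) = n + 1 := rfl
    rw [hc]
    push_cast
    ring_nf
  have e2 : B 3 2 = (h 3 0 / (2*((0:ℕ):ℝ))^2) + ∑' n : ℕ, h 3 (n+1) / (2*(((n+1 : ℕ)):ℝ))^2 :=
    Summable.tsum_eq_zero_add summable_B32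
  have e3 : (h 3 0 / (2*((0:ℕ):ℝ))^2) = 0 := by simp [h]
  have pt : ∀ n : ℕ, h 3 (n+1) / (2*(((n+1 : ℕ)):ℝ))^2 = 1/4 * (h 3 (n+1) / ((n:ℝ)+1)^2) := by
    intro n
    push_cast
    rw [mul_comm (1/4:ℝ), mul_one_div, div_div]
    congr 1
    ring
  rw [e3, zero_add, tsum_congr pt, tsum_mul_left] at e2
  rw [e1]
  rw [e2]
  ring

end Stmt18

theorem stmt18 :
    (∑' k : ℕ+, h 3 (k : ℕ) / ((k : ℕ) : ℝ) ^ 2) = 93 / 8 * Z 5 - 21 / 4 * Z 2 * Z 3 := by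
  have hB : Stmt18.B 3 2 = 3 * Stmt18.lam 5 - 2 * (Stmt18.lam 3 * Stmt18.lam 2) := by
    linarith [Stmt18.masterA, Stmt18.masterB, Stmt18.masterC, Stmt18.masterD]
  rw [Stmt18.LHS_eq, hB, Stmt18.lam5_val, Stmt18.lam3_val, Stmt18.lam2_val]
  ring
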